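/- Let a, b be positive integers, c := a+b, and r ≥ 1 an integer. Let g = Σ_{t=0}^r c_t·T^t ∈ ℂ[T] be a polynomial of degree r with g(0) ≠ 0, and define h := Σ_{t=0}^r c_t·x^{a·t}·y^{b·t}·z^{c·(r−t)} ∈ ℂ[x,y,z]. Then h is squarefree in ℂ[x,y,z] if and only if g is squarefree in ℂ[T]. -/

import Mathlib

open MvPolynomial

noncomputable section Stmt7Aux

abbrev R3 := MvPolynomial (Fin 3) ℂ

def kill2 : R3 →ₐ[ℂ] R3 := aeval (fun i : Fin 3 => if i = 2 then 0 else X i)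
def fac (a b c : ℕ) (α : ℂ) : R3 := X 0 ^ a * X 1 ^ b - C α * X 2 ^ c

variable {a b c : ℕ} {α β : ℂ}

theorem kill2_fac (hc : 0 < c) : kill2 (fac a b c α) = X 0 ^ a * X 1 ^ b := by
  simp [kill2, fac, zero_pow hc.ne', Fin.ext_iff]

theorem P_ne_zero : (X 0 ^ a * X 1 ^ b : R3) ≠ 0 :=
  mul_ne_zero (pow_ne_zero _ (X_ne_zero _)) (pow_ne_zero _ (X_ne_zero _))

theorem not_X2_dvd (hc : 0 < c) : ¬ (X 2 ∣ fac a b c α) := by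
  rintro ⟨m, hm⟩
  apply P_ne_zero (a := a) (b := b)
  rw [← kill2_fac (α := α) hc, hm]
  simp [kill2]

theorem fac_ne_zero (hc : 0 < c) : fac a b c α ≠ 0 := by
  intro h0
  exact not_X2_dvd (α := α) hc (h0 ▸ dvd_zero _)

theorem not_isUnit_fac (ha : 0 < a) (hc : 0 < c) (hα : α ≠ 0) : ¬ IsUnit (fac a b c α) := by
  intro hu
  have h2 := hu.map (aeval (fun i : Fin 3 => if i = 2 then (Polynomial.X : Polynomial ℂ) else 0))
  rw [fac] at h2
  simp only [map_sub, map_mul, map_pow, aeval_X, aeval_C, algebraMap_eq] at h2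
  norm_num [zero_pow ha.ne', Fin.ext_iff] at h2
  rw [Polynomial.isUnit_iff_degree_eq_zero] at h2
  rw [Polynomial.degree_X_pow] at h2
  exact hc.ne' (by exact_mod_cast h2.2)

theorem primeX2 : Prime (X 2 : R3) := by
  rw [← MulEquiv.prime_iff (renameEquiv ℂ (Equiv.swap (0:Fin 3) 2)).toMulEquiv]
  have h1 : (renameEquiv ℂ (Equiv.swap (0:Fin 3) 2)).toMulEquiv (X 2) = X 0 := by
    show rename (Equiv.swap (0:Fin 3) 2) (X 2) = _
    simp
  rw [h1, ← MulEquiv.prime_iff (finSuccEquiv ℂ 2).toMulEquiv]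
  have h2 : (finSuccEquiv ℂ 2).toMulEquiv (X 0) = Polynomial.X := by
    show finSuccEquiv ℂ 2 (X 0) = _
    exact finSuccEquiv_X_zero
  rw [h2]
  exact Polynomial.prime_X

theorem X2_dvd_of_prime_dvd_pow {q : R3} {k : ℕ} (hq : Prime q) (hd : q ∣ (X 2:R3)^k) :
    (X 2:R3) ∣ q :=
  (hq.associated_of_dvd primeX2 (hq.dvd_of_dvd_pow hd)).symm.dvd

theorem isUnit_C_of_ne_zero {u : ℂ} (hu : u ≠ 0) : IsUnit (C u : R3) :=
  (isUnit_iff_ne_zero.mpr hu).map (C : ℂ →+* R3)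

theorem squarefree_fac (ha : 0 < a) (hc : 2 ≤ c) (hα : α ≠ 0) : Squarefree (fac a b c α) := by
  have hc0 : 0 < c := by omega
  rw [squarefree_iff_no_irreducibles (fac_ne_zero hc0)]
  intro p hp hpp
  have hpf : p ∣ fac a b c α := (dvd_mul_right p p).trans hpp
  have hpd : p ∣ pderiv 2 (fac a b c α) := by
    obtain ⟨m, hm⟩ := hpp
    rw [hm, pderiv_mul, pderiv_mul]
    exact dvd_add (dvd_mul_of_dvd_left (dvd_add (dvd_mul_left _ _) (dvd_mul_right _ _)) _)
      (dvd_mul_of_dvd_left (dvd_mul_right _ _) _)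
  have hder : pderiv 2 (fac a b c α) = C (-(α * c)) * X 2 ^ (c-1) := by
    have h0 : (2 : Fin 3) ≠ 0 := by decide
    have h1 : (2 : Fin 3) ≠ 1 := by decide
    simp only [fac, map_sub, pderiv_mul, pderiv_pow, pderiv_X_of_ne h0.symm,
      pderiv_X_of_ne h1.symm, pderiv_X, Pi.single_eq_same, map_neg, map_mul]
    ring_nf
    simp only [pderiv_C, map_natCast]
    ring
  rw [hder, (isUnit_C_of_ne_zero (by simp [hα, hc0.ne'] : (-(α*(c:ℂ))) ≠ 0)).dvd_mul_left] at hpd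
  have hprime : Prime p := UniqueFactorizationMonoid.irreducible_iff_prime.mp hp
  exact not_X2_dvd hc0 ((X2_dvd_of_prime_dvd_pow hprime hpd).trans hpf)

theorem relprime_fac (hc : 0 < c) (hαβ : α ≠ β) :
    IsRelPrime (fac a b c α) (fac a b c β) := by
  intro d hdα hdβ
  by_contra hdu
  have hd0 : d ≠ 0 := fun h => fac_ne_zero (α := α) hc (by rw [h] at hdα; exact zero_dvd_iff.mp hdα)
  obtain ⟨q, hqirr, hqd⟩ := WfDvdMonoid.exists_irreducible_factor hdu hd0
  have hq : Prime q := UniqueFactorizationMonoid.irreducible_iff_prime.mp hqirr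
  have hsub : fac a b c α - fac a b c β = C (β - α) * X 2 ^ c := by
    simp only [fac, map_sub]; ring
  have hqX : q ∣ C (β - α) * X 2 ^ c := hsub ▸ dvd_sub (hqd.trans hdα) (hqd.trans hdβ)
  rw [(isUnit_C_of_ne_zero (sub_ne_zero.mpr hαβ.symm)).dvd_mul_left] at hqX
  exact not_X2_dvd hc ((X2_dvd_of_prime_dvd_pow hq hqX).trans (hqd.trans hdα))

theorem prod_repr {a b c r : ℕ} {g : Polynomial ℂ} (hg : g.degree = r) :
    (∑ t ∈ Finset.range (r + 1),
        C (g.coeff t) * X 0 ^ (a * t) * X 1 ^ (b * t) * X 2 ^ (c * (r - t)) : R3)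
      = C g.leadingCoeff * (g.roots.map (fun α => fac a b c α)).prod := by
  have hgne : g ≠ 0 := fun h0 => by simp [h0] at hg
  have hnat : g.natDegree = r := Polynomial.natDegree_eq_of_degree_eq_some hg
  have hcard : g.roots.card = r := by
    rw [← hnat]
    exact Polynomial.splits_iff_card_roots.mp (IsAlgClosed.splits g)
  set K := FractionRing R3
  have hinj : Function.Injective (algebraMap R3 K) := IsFractionRing.injective R3 K
  apply hinj
  set φ := algebraMap R3 K with hφ
  set ψ := algebraMap ℂ K with hψ
  have hψinj : Function.Injective ψ := RingHom.injective (ψ : ℂ →+* K)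
  have hCψ : ∀ z : ℂ, φ (C z) = ψ z := fun z => by
    rw [hψ, IsScalarTower.algebraMap_apply ℂ R3 K z, algebraMap_eq]
  set P : K := φ (X 0 ^ a * X 1 ^ b) with hP
  set q : K := φ (X 2 ^ c) with hq
  have hq0 : q ≠ 0 := by
    rw [hq, map_ne_zero_iff φ hinj]
    exact pow_ne_zero _ (X_ne_zero _)
  set w : K := P / q with hw
  -- RHS
  have hrhs : φ (C g.leadingCoeff * (g.roots.map (fun α => fac a b c α)).prod)
      = ψ g.leadingCoeff * (g.roots.map (fun α => P - ψ α * q)).prod := by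
    rw [map_mul, hCψ, map_multiset_prod, Multiset.map_map]
    have hmapeq : g.roots.map (⇑φ ∘ fun α => fac a b c α)
        = g.roots.map (fun α => P - ψ α * q) := by
      refine Multiset.map_congr rfl (fun α _ => ?_)
      simp only [Function.comp_apply, fac, map_sub, map_mul, hCψ, ← hP, ← hq]
    rw [hmapeq]
  rw [hrhs]
  -- factor q out of each term
  have hfactor : (g.roots.map (fun α => P - ψ α * q)).prod
      = (g.roots.map (fun α => w - ψ α)).prod * q ^ r := by
    have h1 : ∀ α : ℂ, P - ψ α * q = (w - ψ α) * q := by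
      intro α
      rw [hw, sub_mul, div_mul_cancel₀ _ hq0]
    calc (g.roots.map (fun α => P - ψ α * q)).prod
        = (g.roots.map (fun α => (w - ψ α) * q)).prod := by
          have hmapeq2 : g.roots.map (fun α => P - ψ α * q)
              = g.roots.map (fun α => (w - ψ α) * q) :=
            Multiset.map_congr rfl (fun α _ => h1 α)
          rw [hmapeq2]
      _ = (g.roots.map (fun α => w - ψ α)).prod * (g.roots.map (fun _ => q)).prod := by
          rw [← Multiset.prod_map_mul]
      _ = (g.roots.map (fun α => w - ψ α)).prod * q ^ r := by
          rw [Multiset.map_const', Multiset.prod_replicate, hcard]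
  rw [hfactor]
  -- relate to evaluation of mapped polynomial
  have hsplits : g.Splits := IsAlgClosed.splits g
  have hmap : g.map ψ = Polynomial.C (ψ g.leadingCoeff)
      * ((g.roots.map (fun α => Polynomial.X - Polynomial.C (ψ α))).prod) := by
    have h2 := (hsplits.map ψ).eq_prod_roots
    rw [h2, Polynomial.leadingCoeff_map,
      ← Polynomial.roots_map_of_injective_of_card_eq_natDegree hψinj (hcard.trans hnat.symm),
      Multiset.map_map]
    rfl
  have heval : ψ g.leadingCoeff * (g.roots.map (fun α => w - ψ α)).prod
      = (g.map ψ).eval w := by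
    rw [hmap, Polynomial.eval_mul, Polynomial.eval_C, Polynomial.eval_multiset_prod,
      Multiset.map_map]
    have hmapeq3 : g.roots.map ((Polynomial.eval w) ∘ fun α => Polynomial.X - Polynomial.C (ψ α))
        = g.roots.map (fun α => w - ψ α) := by
      refine Multiset.map_congr rfl (fun α _ => ?_)
      simp
    rw [hmapeq3]
  rw [← mul_assoc, heval]
  -- expand the evaluation as a sum
  have hdegmap : (g.map ψ).natDegree = r := by
    rw [Polynomial.natDegree_map_eq_of_injective hψinj, hnat]
  have hevalsum : (g.map ψ).eval w = ∑ t ∈ Finset.range (r + 1), ψ (g.coeff t) * w ^ t := by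
    rw [Polynomial.eval_eq_sum_range' (n := r + 1) (by omega) w]
    exact Finset.sum_congr rfl (fun t _ => by rw [Polynomial.coeff_map])
  rw [hevalsum, Finset.sum_mul, map_sum]
  refine Finset.sum_congr rfl (fun t ht => ?_)
  rw [Finset.mem_range] at ht
  have htr : t ≤ r := by omega
  have hwt : w ^ t * q ^ r = φ (X 0 ^ a * X 1 ^ b) ^ t * q ^ (r - t) := by
    rw [hw, div_pow, div_mul_eq_mul_div, div_eq_iff (pow_ne_zero _ hq0), mul_assoc, ← pow_add]
    congr 2
    omega
  conv_rhs => rw [mul_assoc, hwt]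
  simp only [hP, hq, map_mul, map_pow, hCψ, ← pow_mul]
  ring

theorem isRelPrime_multiset_prod {x : R3} {s : Multiset ℂ} {F : ℂ → R3}
    (h : ∀ y ∈ s, IsRelPrime x (F y)) : IsRelPrime x (s.map F).prod := by
  induction s using Multiset.induction with
  | empty => simpa using isRelPrime_one_right
  | cons a t ih =>
    simp only [Multiset.map_cons, Multiset.prod_cons]
    exact (h a (Multiset.mem_cons_self a t)).mul_right
      (ih fun y hy => h y (Multiset.mem_cons_of_mem hy))

theorem squarefree_iff_nodup_roots {g : Polynomial ℂ} (hg0 : g ≠ 0) :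
    Squarefree g ↔ g.roots.Nodup := by
  classical
  constructor
  · intro hsq
    rw [Multiset.nodup_iff_count_le_one]
    intro α
    by_contra hcnt
    push_neg at hcnt
    have h2 : (Polynomial.X - Polynomial.C α) ^ 2 ∣ g := by
      rw [Polynomial.count_roots] at hcnt
      exact (Polynomial.le_rootMultiplicity_iff hg0).mp (by omega)
    exact Polynomial.not_isUnit_X_sub_C α (hsq _ (by rw [← sq]; exact h2))
  · intro hnd x hxx
    by_contra hxu
    have hdeg : 0 < x.degree := by
      by_contra hd
      push_neg at hd
      have hxC := Polynomial.eq_C_of_degree_le_zero hd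
      have hx0 : x ≠ 0 := by
        rintro rfl
        rw [mul_zero, zero_dvd_iff] at hxx
        exact hg0 hxx
      exact hxu (hxC ▸ Polynomial.isUnit_C.mpr
        (isUnit_iff_ne_zero.mpr (fun hcc => hx0 (by rw [hxC, hcc, map_zero]))))
    obtain ⟨α, hroot⟩ := Complex.exists_root hdeg
    have hdvd : (Polynomial.X - Polynomial.C α) ∣ x := Polynomial.dvd_iff_isRoot.mpr hroot
    have h2 : (Polynomial.X - Polynomial.C α) ^ 2 ∣ g :=
      dvd_trans (by rw [sq]; exact mul_dvd_mul hdvd hdvd) hxx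
    have hle := (Polynomial.le_rootMultiplicity_iff hg0).mpr h2
    rw [← Polynomial.count_roots] at hle
    have := Multiset.nodup_iff_count_le_one.mp hnd α
    omega

theorem squarefree_fac_prod {a b c : ℕ} (ha : 0 < a) (hc2 : 2 ≤ c) (s : Multiset ℂ) :
    (∀ α ∈ s, α ≠ 0) → s.Nodup → Squarefree ((s.map (fac a b c)).prod) := by
  induction s using Multiset.induction with
  | empty => intro _ _; simpa using squarefree_one
  | cons x t ih =>
    intro h0 hnd
    rw [Multiset.nodup_cons] at hnd
    simp only [Multiset.map_cons, Multiset.prod_cons]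
    refine squarefree_mul_iff.mpr ⟨?_, squarefree_fac ha hc2 (h0 x (Multiset.mem_cons_self x t)),
      ih (fun α hα => h0 α (Multiset.mem_cons_of_mem hα)) hnd.2⟩
    exact isRelPrime_multiset_prod
      (fun β hβ => relprime_fac (by omega) (fun he => hnd.1 (he ▸ hβ)))

theorem not_squarefree_fac_prod {a b c : ℕ} (ha : 0 < a) (hc2 : 2 ≤ c) {s : Multiset ℂ}
    (h0 : ∀ α ∈ s, α ≠ 0) (hnd : ¬ s.Nodup) :
    ¬ Squarefree ((s.map (fac a b c)).prod) := by
  obtain ⟨α, hα⟩ : ∃ α, 2 ≤ s.count α := by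
    by_contra hno
    push_neg at hno
    exact hnd (Multiset.nodup_iff_count_le_one.mpr (fun α => by have := hno α; omega))
  have hrep : Multiset.replicate 2 α ≤ s := Multiset.le_count_iff_replicate_le.mp hα
  have hdvd : fac a b c α * fac a b c α ∣ (s.map (fac a b c)).prod := by
    have := Multiset.prod_dvd_prod_of_le (Multiset.map_le_map (f := fac a b c) hrep)
    simpa [Multiset.map_replicate, Multiset.prod_replicate, pow_two] using this
  have hα0 : α ≠ 0 := h0 α (Multiset.count_pos.mp (by omega))
  exact fun hsq => not_isUnit_fac ha (by omega) hα0 (hsq _ hdvd)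

end Stmt7Aux


/-- If `a, b` are positive integers, `c = a + b`, `g` is a polynomial of degree `r ≥ 1`
with `g(0) ≠ 0`, and `h = Σ c_t x^{at} y^{bt} z^{c(r−t)}`, then `h` is squarefree in
`ℂ[x,y,z]` if and only if `g` is squarefree in `ℂ[T]`. -/
theorem stmt7 (a b c r : ℕ) (ha : 0 < a) (hb : 0 < b) (hc : c = a + b) (hr : 1 ≤ r)
    (g : Polynomial ℂ) (hg : g.degree = r) (hg0 : g.eval 0 ≠ 0)
    (h : MvPolynomial (Fin 3) ℂ)
    (hh : h = ∑ t ∈ Finset.range (r + 1),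
        C (g.coeff t) * X 0 ^ (a * t) * X 1 ^ (b * t) * X 2 ^ (c * (r - t))) :
    Squarefree h ↔ Squarefree g := by
  have hc2 : 2 ≤ c := by omega
  have hgne : g ≠ 0 := fun h0 => by simp [h0] at hg
  have hL : g.leadingCoeff ≠ 0 := Polynomial.leadingCoeff_ne_zero.mpr hgne
  have hroots0 : ∀ α ∈ g.roots, α ≠ 0 := by
    intro α hα h0
    subst h0
    exact hg0 ((Polynomial.mem_roots hgne).mp hα)
  have hrepr : h = C g.leadingCoeff * (g.roots.map (fun α => fac a b c α)).prod := by
    rw [hh]; exact prod_repr hg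
  have hunit : IsUnit (C g.leadingCoeff : R3) := isUnit_C_of_ne_zero hL
  have hdvd1 : (g.roots.map (fun α => fac a b c α)).prod ∣ h := hrepr ▸ dvd_mul_left _ _
  have hdvd2 : h ∣ (g.roots.map (fun α => fac a b c α)).prod := by
    rw [hrepr]
    exact (hunit.mul_left_dvd).mpr dvd_rfl
  have key1 : Squarefree h ↔ Squarefree ((g.roots.map (fun α => fac a b c α)).prod) :=
    ⟨fun hs => hs.squarefree_of_dvd hdvd1, fun hs => hs.squarefree_of_dvd hdvd2⟩
  rw [key1, squarefree_iff_nodup_roots hgne]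
  constructor
  · intro hsqF
    by_contra hnd
    exact not_squarefree_fac_prod ha hc2 hroots0 hnd hsqF
  · intro hnd
    exact squarefree_fac_prod ha hc2 g.roots hroots0 hnd
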